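/- Let L ⊣ R be an adjunction with R fully faithful and the target category of L Karoubian, and T = R L the induced monad with unit η and multiplication μ = R ε L. Then every 'unital algebra' for T is associative: if φ : T M ⟶ M satisfies φ ∘ η_M = 1_M, then φ ∘ T(φ) = φ ∘ μ_M, i.e. (M, φ) is a T-algebra. -/
import Mathlib


open CategoryTheory

/-- If `L ⊣ R` with `R` fully faithful and `D` idempotent complete, then every unital
`T`-action is associative (`T = R L`, `μ = R ε L`): if `φ ∘ η_M = 1_M` then
`φ ∘ T(φ) = φ ∘ μ_M`, i.e. `(M, φ)` is a `T`-algebra. -/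
theorem unital_action_is_associative
    {C D : Type*} [Category C] [Category D]
    (L : C ⥤ D) (R : D ⥤ C) (adj : L ⊣ R)
    [R.Full] [R.Faithful] [IsIdempotentComplete D]
    (M : C) (φ : R.obj (L.obj M) ⟶ M) (hφ : adj.unit.app M ≫ φ = 𝟙 M) :
    R.map (L.map φ) ≫ φ = R.map (adj.counit.app (L.obj M)) ≫ φ := by
  -- Since `R` is fully faithful, the counit is an isomorphism.
  have hiso : IsIso (R.map (adj.counit.app (L.obj M))) := inferInstance
  have tri : adj.unit.app (R.obj (L.obj M)) ≫ R.map (adj.counit.app (L.obj M)) = 𝟙 _ :=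
    adj.right_triangle_components _
  have hinv : R.map (adj.counit.app (L.obj M)) ≫ adj.unit.app (R.obj (L.obj M)) = 𝟙 _ := by
    rw [← cancel_mono (R.map (adj.counit.app (L.obj M)))]
    simp [tri]
  have hnat : adj.unit.app (R.obj (L.obj M)) ≫ R.map (L.map φ) = φ ≫ adj.unit.app M :=
    (adj.unit.naturality φ).symm
  calc R.map (L.map φ) ≫ φ
      = (R.map (adj.counit.app (L.obj M)) ≫ adj.unit.app (R.obj (L.obj M))) ≫
          R.map (L.map φ) ≫ φ := by rw [hinv]; simp
    _ = R.map (adj.counit.app (L.obj M)) ≫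
          (adj.unit.app (R.obj (L.obj M)) ≫ R.map (L.map φ)) ≫ φ := by simp
    _ = R.map (adj.counit.app (L.obj M)) ≫ φ ≫ adj.unit.app M ≫ φ := by rw [hnat]; simp
    _ = R.map (adj.counit.app (L.obj M)) ≫ φ := by rw [hφ]; simp
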